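/- Let γ = (F_max/F_min)(c_min/c_max) < 1 with F_min, F_max, c_min, c_max > 0 and let c_st0 ∈ (0, c_max). If S : [0,T] → ℝ is C^1, S(0) = S_in ≥ 0, and whenever S'(t) > 0 one has S'(t) ≤ (F_min c_max)/(ε c_min) * (γ - (c_st0/c_max + S(t))/(1 + S(t))), then S(t) ≤ max{S_in, (γ c_max - c_st0)/(c_max(1-γ))} for all t ∈ [0,T]. -/

import Mathlib

theorem stmt7 (T F_min F_max c_min c_max c_st0 ε S_in γ : ℝ) (hT : 0 < T)
    (hFmin : 0 < F_min) (hFmax : F_min ≤ F_max) (hcmin : 0 < c_min) (hcmax : c_min < c_max)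
    (hε : 0 < ε) (hcst0 : c_st0 ∈ Set.Ioo 0 c_max)
    (hγ : γ = (F_max / F_min) * (c_min / c_max)) (hγ1 : γ < 1)
    (S S' : ℝ → ℝ) (hS'c : ContinuousOn S' (Set.Icc 0 T))
    (hderiv : ∀ t ∈ Set.Icc 0 T, HasDerivWithinAt S (S' t) (Set.Icc 0 T) t)
    (hS0 : S 0 = S_in) (hSin : 0 ≤ S_in) (hSnn : ∀ t ∈ Set.Icc 0 T, 0 ≤ S t)
    (hineq : ∀ t ∈ Set.Icc 0 T, 0 < S' t →
      S' t ≤ (F_min * c_max) / (ε * c_min) * (γ - (c_st0 / c_max + S t) / (1 + S t))) :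
    ∀ t ∈ Set.Icc 0 T, S t ≤ max S_in ((γ * c_max - c_st0) / (c_max * (1 - γ))) := by
  set B : ℝ := (γ * c_max - c_st0) / (c_max * (1 - γ)) with hB
  set M : ℝ := max S_in B with hM
  have hcmax0 : (0:ℝ) < c_max := lt_trans hcmin hcmax
  have h1γ : (0:ℝ) < 1 - γ := by linarith
  -- key: derivative is nonpositive when S x ≥ B
  have hkey : ∀ x ∈ Set.Icc (0:ℝ) T, B ≤ S x → S' x ≤ 0 := by
    intro x hx hBx
    by_contra h
    push_neg at h
    have hle := hineq x hx h
    have hs : 0 ≤ S x := hSnn x hx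
    have h1s : (0:ℝ) < 1 + S x := by linarith
    have hq : γ ≤ (c_st0 / c_max + S x) / (1 + S x) := by
      rw [le_div_iff₀ h1s]
      have hBs : B * (c_max * (1 - γ)) = γ * c_max - c_st0 := by
        rw [hB]; exact div_mul_cancel₀ _ (mul_pos hcmax0 h1γ).ne'
      have h2 : γ * c_max - c_st0 ≤ S x * ((1 - γ) * c_max) := by
        nlinarith [mul_le_mul_of_nonneg_right hBx
          (by positivity : (0:ℝ) ≤ (1 - γ) * c_max)]
      have h3 : γ * (1 + S x) * c_max ≤ (c_st0 / c_max + S x) * c_max := by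
        have he : (c_st0 / c_max + S x) * c_max = c_st0 + S x * c_max := by
          field_simp
        rw [he]; nlinarith [h2]
      exact le_of_mul_le_mul_right h3 hcmax0
    have hK : 0 ≤ (F_min * c_max) / (ε * c_min) := by positivity
    have : S' x ≤ 0 := le_trans hle (by nlinarith)
    linarith
  -- continuity of S
  have hScont : ContinuousOn S (Set.Icc 0 T) := fun x hx =>
    (hderiv x hx).continuousWithinAt
  intro t₀ ht₀
  by_contra hlt
  push_neg at hlt
  have hSinM : S_in ≤ M := le_max_left _ _
  have hBM : B ≤ M := le_max_right _ _
  obtain ⟨ht₀0, ht₀T⟩ := ht₀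
  have h0mem : (0:ℝ) ∈ Set.Icc (0:ℝ) T := ⟨le_refl _, le_of_lt hT⟩
  set A : Set ℝ := {t | t ∈ Set.Icc (0:ℝ) t₀ ∧ S t ≤ M} with hA
  have h0A : (0:ℝ) ∈ A := ⟨⟨le_refl _, ht₀0⟩, by rw [hS0]; exact hSinM⟩
  have hAne : A.Nonempty := ⟨0, h0A⟩
  have hAbdd : BddAbove A := ⟨t₀, fun x hx => hx.1.2⟩
  set u : ℝ := sSup A with hu
  have hAclosed : IsClosed A := by
    have : A = Set.Icc 0 t₀ ∩ S ⁻¹' (Set.Iic M) := by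
      ext x; simp [hA, Set.mem_Iic, and_assoc]
    rw [this]
    exact (hScont.mono (Set.Icc_subset_Icc le_rfl ht₀T)).preimage_isClosed_of_isClosed
      isClosed_Icc isClosed_Iic
  have huA : u ∈ A := hAclosed.csSup_mem hAne hAbdd
  have hu0 : 0 ≤ u := le_csSup hAbdd h0A
  have hut₀ : u ≤ t₀ := huA.1.2
  have huM : S u ≤ M := huA.2
  have hunot : u ≠ t₀ := fun h => by rw [h] at huM; linarith
  have hult : u < t₀ := lt_of_le_of_ne hut₀ hunot
  -- on (u, t₀], S > M
  have hgt : ∀ x, u < x → x ≤ t₀ → M < S x := by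
    intro x hux hxt
    by_contra h
    push_neg at h
    have : x ∈ A := ⟨⟨le_trans hu0 (le_of_lt hux), hxt⟩, h⟩
    exact absurd (le_csSup hAbdd this) (not_le.mpr hux)
  -- S is antitone on [u, t₀]
  have hsub : Set.Icc u t₀ ⊆ Set.Icc 0 T := Set.Icc_subset_Icc hu0 ht₀T
  have hanti : AntitoneOn S (Set.Icc u t₀) := by
    apply antitoneOn_of_deriv_nonpos (convex_Icc u t₀)
      (hScont.mono hsub)
    · intro x hx
      rw [interior_Icc] at hx
      have hxIcc : x ∈ Set.Icc (0:ℝ) T := hsub ⟨le_of_lt hx.1, le_of_lt hx.2⟩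
      have hxOoT : x ∈ Set.Ioo (0:ℝ) T := ⟨lt_of_le_of_lt hu0 hx.1, lt_of_lt_of_le hx.2 ht₀T⟩
      have hnhds : Set.Icc (0:ℝ) T ∈ nhds x := Icc_mem_nhds hxOoT.1 hxOoT.2
      exact ((hderiv x hxIcc).hasDerivAt hnhds).differentiableAt.differentiableWithinAt
    · intro x hx
      rw [interior_Icc] at hx
      have hxIcc : x ∈ Set.Icc (0:ℝ) T := hsub ⟨le_of_lt hx.1, le_of_lt hx.2⟩
      have hxOoT : x ∈ Set.Ioo (0:ℝ) T := ⟨lt_of_le_of_lt hu0 hx.1, lt_of_lt_of_le hx.2 ht₀T⟩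
      have hnhds : Set.Icc (0:ℝ) T ∈ nhds x := Icc_mem_nhds hxOoT.1 hxOoT.2
      have hd : HasDerivAt S (S' x) x := (hderiv x hxIcc).hasDerivAt hnhds
      rw [hd.deriv]
      exact hkey x hxIcc (le_trans hBM (le_of_lt (hgt x hx.1 (le_of_lt hx.2))))
  have := hanti (Set.left_mem_Icc.mpr hut₀) (Set.right_mem_Icc.mpr hut₀) hut₀
  linarith
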